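/- The number of elements of norm j/2 mod 1 in the discriminant form 2_{II}^{ε n} (an orthogonal sum of n/2 hyperbolic or anti-hyperbolic planes over Z/2Z, n even) is 2^{n−1} + ε(−1)^j 2^{(n−2)/2}. -/

import Mathlib

private def χ (t : ZMod 2) : ℚ := if t = 0 then 1 else -1

private lemma two_eq_zero : (1 + 1 : ZMod 2) = 0 := by decide

private lemma chi_add (a b : ZMod 2) : χ (a + b) = χ a * χ b := by
  fin_cases a <;> fin_cases b <;> simp +decide [χ, two_eq_zero] <;> norm_num

private lemma chi_ite (a b : ZMod 2) :
    (if a = b then (1 : ℚ) else 0) = (1 + χ a * χ b) / 2 := by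
  have h01 : ∀ x : ZMod 2, x = 0 ∨ x = 1 := by decide
  rcases h01 a with rfl | rfl <;> rcases h01 b with rfl | rfl <;> simp +decide [χ]

private lemma chi_sum {ι : Type*} (t : Finset ι) (f : ι → ZMod 2) :
    χ (∑ i ∈ t, f i) = ∏ i ∈ t, χ (f i) := by
  induction t using Finset.cons_induction with
  | empty => simp [χ]
  | cons a t ha ih => simp [Finset.sum_cons, Finset.prod_cons, chi_add, ih]

private lemma chi_int (j : ℤ) : χ (j : ZMod 2) = (-1 : ℚ) ^ j := by
  rcases Int.even_or_odd j with h | h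
  · have h0 : (j : ZMod 2) = 0 := by
      rw [ZMod.intCast_zmod_eq_zero_iff_dvd]
      exact h.two_dvd
    rw [h0, h.neg_one_zpow]; rfl
  · obtain ⟨k, hk⟩ := h
    have h1 : (j : ZMod 2) = 1 := by
      subst hk; push_cast
      rw [show ((2 : ZMod 2)) = 0 from by decide]
      ring
    rw [h1, Odd.neg_one_zpow ⟨k, hk⟩]; rfl

private lemma plane_sum (a : ℤ) (ha : a = 1 ∨ a = -1) :
    (∑ y : ZMod 2 × ZMod 2,
      χ (if a = 1 then y.1 * y.2 else y.1 ^ 2 + y.1 * y.2 + y.2 ^ 2)) = 2 * (a : ℚ) := by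
  have hz : ∀ f : ZMod 2 → ℚ, ∑ x, f x = f 0 + f 1 := by
    intro f
    rw [show (Finset.univ : Finset (ZMod 2)) = {0, 1} from by decide,
      Finset.sum_insert (by decide), Finset.sum_singleton]
  rcases ha with h | h <;> subst h <;>
    rw [Fintype.sum_prod_type, hz] <;> simp only [hz] <;>
    norm_num [χ, two_eq_zero, show ((3 : ZMod 2) = 0) ↔ False from by decide]

/-- the number of elements of norm j/2 in the even 2-adic discriminant
form `2_{II}^{εn}` (orthogonal sum of `m = n/2` hyperbolic (`s i = 1`) or
anti-hyperbolic (`s i = -1`) planes over `ℤ/2ℤ`, `ε = ∏ s i`) is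
`2^(n-1) + ε (-1)^j 2^((n-2)/2)`. -/
theorem count_norm_j_even_two_adic (m : ℕ) (s : Fin m → ℤ)
    (hs : ∀ i, s i = 1 ∨ s i = -1) (j : ℤ) :
    ((Finset.univ.filter fun x : Fin m → ZMod 2 × ZMod 2 =>
        (∑ i, (if s i = 1 then (x i).1 * (x i).2
               else (x i).1 ^ 2 + (x i).1 * (x i).2 + (x i).2 ^ 2)) = (j : ZMod 2)).card : ℚ)
      = (2 : ℚ) ^ ((2 * m : ℤ) - 1)
        + ((∏ i, s i : ℤ) : ℚ) * (-1 : ℚ) ^ j * (2 : ℚ) ^ (((2 * m : ℤ) - 2) / 2) := by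
  classical
  set q : Fin m → ZMod 2 × ZMod 2 → ZMod 2 := fun i y =>
    if s i = 1 then y.1 * y.2 else y.1 ^ 2 + y.1 * y.2 + y.2 ^ 2 with hq
  have hcard : ((Finset.univ.filter fun x : Fin m → ZMod 2 × ZMod 2 =>
      (∑ i, q i (x i)) = (j : ZMod 2)).card : ℚ)
      = ∑ x : Fin m → ZMod 2 × ZMod 2,
          if (∑ i, q i (x i)) = (j : ZMod 2) then (1 : ℚ) else 0 := by
    rw [Finset.card_filter]
    push_cast
    rfl
  have hchar : ∑ x : Fin m → ZMod 2 × ZMod 2, χ (∑ i, q i (x i))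
      = 2 ^ m * ((∏ i, s i : ℤ) : ℚ) := by
    have h1 : ∀ x : Fin m → ZMod 2 × ZMod 2,
        χ (∑ i, q i (x i)) = ∏ i, χ (q i (x i)) := fun x => chi_sum _ _
    simp only [h1]
    have h2 : (∏ i : Fin m, ∑ y : ZMod 2 × ZMod 2, χ (q i y))
        = ∑ x ∈ Fintype.piFinset (fun _ : Fin m => (Finset.univ : Finset (ZMod 2 × ZMod 2))),
            ∏ i, χ (q i (x i)) := Finset.prod_univ_sum _ _
    rw [Fintype.piFinset_univ] at h2
    rw [← h2]
    have h3 : ∀ i, (∑ y : ZMod 2 × ZMod 2, χ (q i y)) = 2 * (s i : ℚ) := fun i =>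
      plane_sum (s i) (hs i)
    simp only [h3]
    rw [Finset.prod_mul_distrib, Finset.prod_const, Finset.card_univ, Fintype.card_fin]
    push_cast
    ring
  have key : ((Finset.univ.filter fun x : Fin m → ZMod 2 × ZMod 2 =>
      (∑ i, q i (x i)) = (j : ZMod 2)).card : ℚ)
      = (4 ^ m + (-1 : ℚ) ^ j * (2 ^ m * ((∏ i, s i : ℤ) : ℚ))) / 2 := by
    rw [hcard]
    have : ∀ x : Fin m → ZMod 2 × ZMod 2,
        (if (∑ i, q i (x i)) = (j : ZMod 2) then (1 : ℚ) else 0)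
          = (1 + χ (∑ i, q i (x i)) * χ (j : ZMod 2)) / 2 := fun x => chi_ite _ _
    simp only [this]
    rw [← Finset.sum_div, Finset.sum_add_distrib, ← Finset.sum_mul, hchar, chi_int,
      Finset.sum_const, Finset.card_univ]
    have hc : (Fintype.card (Fin m → ZMod 2 × ZMod 2)) = 4 ^ m := by
      simp [Fintype.card_fun]
    rw [hc]
    push_cast
    ring
  rw [key]
  have e1 : (2 : ℚ) ^ ((2 * m : ℤ) - 1) = 4 ^ m / 2 := by
    rw [zpow_sub₀ (by norm_num : (2:ℚ) ≠ 0)]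
    have : ((2 * m : ℤ)) = ((2 * m : ℕ) : ℤ) := by push_cast; ring
    rw [this, zpow_natCast, zpow_one, pow_mul]
    norm_num
  have e2 : (2 : ℚ) ^ (((2 * m : ℤ) - 2) / 2) = 2 ^ m / 2 := by
    have : ((2 * m : ℤ) - 2) / 2 = (m : ℤ) - 1 := by omega
    rw [this, zpow_sub₀ (by norm_num : (2:ℚ) ≠ 0), zpow_natCast, zpow_one]
  rw [e1, e2]
  ring
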